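/- Define G(r) := (-1/(4π²)) * (2*I_1(r)*K_1(r) + 2*I_2(r)*K_0(r) - 1) / (I_1(r)² - I_0(r)*I_2(r)) for r > 0. Then G(r) / (-(1/(2π²)) * log r) tends to 1 as r tends to 0 from above. -/

import Mathlib

/-- Modified Bessel function of the first kind of order `k`. -/
noncomputable def besselI (k : ℕ) (x : ℝ) : ℝ :=
  ∑' n : ℕ, (x / 2) ^ (2 * n + k) / (Nat.factorial n * Nat.factorial (n + k))

/-- Modified Bessel function of the second kind of order `k`,
via the integral representation `K_k(x) = ∫_0^∞ e^{-x cosh t} cosh(k t) dt` (valid for `x > 0`). -/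
noncomputable def besselK (k : ℕ) (x : ℝ) : ℝ :=
  ∫ t in Set.Ioi (0 : ℝ), Real.exp (-x * Real.cosh t) * Real.cosh (k * t)

/-- The variance function `G` of the sphere average process. -/
noncomputable def sphereG (r : ℝ) : ℝ :=
  (-(1 / (4 * Real.pi ^ 2))) *
    ((2 * besselI 1 r * besselK 1 r + 2 * besselI 2 r * besselK 0 r - 1) /
      (besselI 1 r ^ 2 - besselI 0 r * besselI 2 r))


open Real MeasureTheory Set Filter

lemma besselI_summable (k : ℕ) (x : ℝ) :
    Summable (fun n : ℕ => (x / 2) ^ (2 * n + k) / (Nat.factorial n * Nat.factorial (n + k))) := by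
  have hs : Summable (fun n : ℕ => |x / 2| ^ k * (((x/2)^2) ^ n / n.factorial)) :=
    (Real.summable_pow_div_factorial ((x/2)^2)).mul_left _
  apply Summable.of_norm
  apply hs.of_nonneg_of_le (fun n => norm_nonneg _)
  intro n
  have h1 : ‖(x / 2) ^ (2 * n + k) / ((Nat.factorial n : ℝ) * Nat.factorial (n + k))‖
      = |x/2| ^ (2*n+k) / ((Nat.factorial n : ℝ) * Nat.factorial (n + k)) := by
    rw [norm_div, norm_pow, Real.norm_eq_abs, Real.norm_eq_abs]
    congr 1
    rw [abs_of_nonneg (by positivity)]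
  rw [h1]
  have h2 : (1:ℝ) * (Nat.factorial n : ℝ) ≤ (Nat.factorial n : ℝ) * Nat.factorial (n + k) := by
    rw [one_mul]
    have : (1:ℝ) ≤ Nat.factorial (n+k) := by exact_mod_cast Nat.one_le_iff_ne_zero.mpr (Nat.factorial_ne_zero _)
    nlinarith [(Nat.cast_pos (α := ℝ)).mpr (Nat.factorial_pos n)]
  calc |x/2| ^ (2*n+k) / ((Nat.factorial n : ℝ) * Nat.factorial (n + k))
      ≤ |x/2| ^ (2*n+k) / (1 * (Nat.factorial n : ℝ)) := by
        apply div_le_div_of_nonneg_left (by positivity) (by positivity) h2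
    _ = |x/2| ^ k * (((x/2)^2) ^ n / n.factorial) := by
        rw [one_mul, pow_add, pow_mul, sq_abs]
        ring

lemma besselI_lower (k : ℕ) {x : ℝ} (h0 : 0 ≤ x) :
    (x/2)^k / k.factorial ≤ besselI k x := by
  have hsum := besselI_summable k x
  rw [besselI, Summable.tsum_eq_zero_add hsum]
  have h0' : (x / 2) ^ (2 * 0 + k) / ((Nat.factorial 0 : ℝ) * Nat.factorial (0 + k))
      = (x/2)^k / k.factorial := by norm_num
  rw [h0']
  have : 0 ≤ ∑' n : ℕ, (x / 2) ^ (2 * (n+1) + k) / ((Nat.factorial (n+1) : ℝ) * Nat.factorial ((n+1) + k)) :=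
    tsum_nonneg (fun n => by positivity)
  linarith

lemma besselI_upper (k : ℕ) {x : ℝ} (h0 : 0 ≤ x) (h1 : x ≤ 1) :
    besselI k x ≤ (x/2)^k / k.factorial + 2 * (x/2)^(k+2) := by
  have hsum := besselI_summable k x
  rw [besselI, Summable.tsum_eq_zero_add hsum]
  have h0' : (x / 2) ^ (2 * 0 + k) / ((Nat.factorial 0 : ℝ) * Nat.factorial (0 + k))
      = (x/2)^k / k.factorial := by norm_num
  rw [h0']
  have key : ∑' n : ℕ, (x / 2) ^ (2 * (n+1) + k) / ((Nat.factorial (n+1) : ℝ) * Nat.factorial ((n+1) + k))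
      ≤ ∑' n : ℕ, (x/2)^(k+2) * (1/4 : ℝ)^n := by
    apply Summable.tsum_le_tsum _ ((besselI_summable k x).comp_injective (add_left_injective 1))
      (Summable.mul_left _ (summable_geometric_of_lt_one (by norm_num) (by norm_num)))
    intro n
    have hb : (x / 2) ^ (2 * (n+1) + k) / ((Nat.factorial (n+1) : ℝ) * Nat.factorial ((n+1) + k))
        ≤ (x / 2) ^ (2 * (n+1) + k) := by
      apply div_le_self (by positivity)
      have h1 : (1:ℝ) ≤ Nat.factorial (n+1) := by exact_mod_cast Nat.one_le_iff_ne_zero.mpr (Nat.factorial_ne_zero _)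
      have h2 : (1:ℝ) ≤ Nat.factorial (n+1+k) := by exact_mod_cast Nat.one_le_iff_ne_zero.mpr (Nat.factorial_ne_zero _)
      nlinarith
    refine hb.trans ?_
    have : (x / 2) ^ (2 * (n+1) + k) = (x/2)^(k+2) * ((x/2)^2)^n := by
      rw [← pow_mul]; ring
    rw [this]
    apply mul_le_mul_of_nonneg_left _ (by positivity)
    apply pow_le_pow_left₀ (by positivity)
    nlinarith
  have hgeo : ∑' n : ℕ, (x/2)^(k+2) * (1/4 : ℝ)^n = (x/2)^(k+2) * (4/3) := by
    rw [tsum_mul_left, tsum_geometric_of_lt_one (by norm_num) (by norm_num)]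
    norm_num
  rw [hgeo] at key
  have hp : (0:ℝ) ≤ (x/2)^(k+2) := by positivity
  linarith

lemma mem01 : ∀ᶠ x : ℝ in nhdsWithin 0 (Set.Ioi 0), x ∈ Ioo (0:ℝ) 1 :=
  Ioo_mem_nhdsGT_of_mem (by norm_num : (0:ℝ) ∈ Ico (0:ℝ) 1)

lemma tendsto_besselI0 : Tendsto (fun x => besselI 0 x) (nhdsWithin 0 (Set.Ioi 0)) (nhds 1) := by
  apply tendsto_of_tendsto_of_tendsto_of_le_of_le' (g := fun _ : ℝ => (1:ℝ))
    (h := fun x : ℝ => 1 + 2 * (x/2)^2)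
  · exact tendsto_const_nhds
  · have : Tendsto (fun x : ℝ => 1 + 2 * (x/2)^2) (nhds 0) (nhds (1 + 2*(0/2)^2)) := by
      apply Continuous.tendsto; continuity
    simpa using this.mono_left nhdsWithin_le_nhds
  · filter_upwards [mem01] with x hx
    simpa using besselI_lower 0 hx.1.le
  · filter_upwards [mem01] with x hx
    simpa using besselI_upper 0 hx.1.le hx.2.le

lemma tendsto_besselI1 : Tendsto (fun x => besselI 1 x / x) (nhdsWithin 0 (Set.Ioi 0)) (nhds (1/2)) := by
  apply tendsto_of_tendsto_of_tendsto_of_le_of_le' (g := fun _ : ℝ => (1/2:ℝ))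
    (h := fun x : ℝ => 1/2 + x^2/4)
  · exact tendsto_const_nhds
  · have : Tendsto (fun x : ℝ => 1/2 + x^2/4) (nhds 0) (nhds (1/2 + 0^2/4)) := by
      apply Continuous.tendsto; continuity
    simpa using this.mono_left nhdsWithin_le_nhds
  · filter_upwards [mem01] with x hx
    rw [le_div_iff₀ hx.1]
    have := besselI_lower 1 hx.1.le
    norm_num at this
    linarith
  · filter_upwards [mem01] with x hx
    rw [div_le_iff₀ hx.1]
    have := besselI_upper 1 hx.1.le hx.2.le
    have h1 : (x/2)^1 / (Nat.factorial 1 : ℝ) + 2 * (x/2)^(1+2) = x/2 + x^3/4 := by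
      norm_num; ring
    rw [h1] at this
    nlinarith [hx.1]

lemma tendsto_besselI2 : Tendsto (fun x => besselI 2 x / x^2) (nhdsWithin 0 (Set.Ioi 0)) (nhds (1/8)) := by
  apply tendsto_of_tendsto_of_tendsto_of_le_of_le' (g := fun _ : ℝ => (1/8:ℝ))
    (h := fun x : ℝ => 1/8 + x^2/4)
  · exact tendsto_const_nhds
  · have : Tendsto (fun x : ℝ => 1/8 + x^2/4) (nhds 0) (nhds (1/8 + 0^2/4)) := by
      apply Continuous.tendsto; continuity
    simpa using this.mono_left nhdsWithin_le_nhds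
  · filter_upwards [mem01] with x hx
    rw [le_div_iff₀ (pow_pos hx.1 2)]
    have := besselI_lower 2 hx.1.le
    have h1 : (x/2)^2 / (Nat.factorial 2 : ℝ) = x^2/8 := by norm_num; ring
    rw [h1] at this
    linarith
  · filter_upwards [mem01] with x hx
    rw [div_le_iff₀ (pow_pos hx.1 2)]
    have := besselI_upper 2 hx.1.le hx.2.le
    have h1 : (x/2)^2 / (Nat.factorial 2 : ℝ) + 2 * (x/2)^(2+2) = x^2/8 + x^4/8 := by
      norm_num; ring
    rw [h1] at this
    nlinarith [hx.1]

lemma cosh_le_exp_of_nonneg {y : ℝ} (hy : 0 ≤ y) : Real.cosh y ≤ Real.exp y := by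
  rw [Real.cosh_eq]
  have : Real.exp (-y) ≤ Real.exp y := Real.exp_le_exp.mpr (by linarith)
  linarith

lemma exp_quad_lower {t : ℝ} (ht : 0 ≤ t) : t^2/2 ≤ Real.exp t := by
  have h := Real.quadratic_le_exp_of_nonneg ht
  nlinarith

lemma besselK_integrand_le (k : ℕ) {x t : ℝ} (hx : 0 < x) (ht : 0 < t) :
    Real.exp (-x * Real.cosh t) * Real.cosh (k * t) ≤ Real.exp (2*(k+1)^2/x) * Real.exp (-t) := by
  have h1 : Real.cosh ((k:ℝ) * t) ≤ Real.exp ((k:ℝ)*t) :=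
    cosh_le_exp_of_nonneg (by positivity)
  have h2 : Real.exp (-x * Real.cosh t) * Real.cosh ((k:ℝ) * t)
      ≤ Real.exp (-x * Real.cosh t + (k:ℝ)*t) := by
    rw [Real.exp_add]
    exact mul_le_mul_of_nonneg_left h1 (Real.exp_pos _).le
  refine h2.trans ?_
  rw [← Real.exp_add, Real.exp_le_exp]
  have hch : Real.exp t / 2 ≤ Real.cosh t := by
    rw [Real.cosh_eq]
    have := (Real.exp_pos (-t)).le
    linarith
  have hquad : t^2/2 ≤ Real.exp t := exp_quad_lower ht.le
  have hxc : x * (t^2/4) ≤ x * Real.cosh t := by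
    apply mul_le_mul_of_nonneg_left _ hx.le
    linarith
  have key : ((k:ℝ)+1) * t ≤ x * t^2/4 + 2*((k:ℝ)+1)^2/x := by
    rw [div_add_div _ _ (by norm_num : (4:ℝ) ≠ 0) hx.ne', le_div_iff₀ (by positivity)]
    nlinarith [sq_nonneg (x*t/2 - 2*((k:ℝ)+1))]
  have hk : (0:ℝ) ≤ k := Nat.cast_nonneg k
  push_cast
  nlinarith

lemma besselK_integrable (k : ℕ) {x : ℝ} (hx : 0 < x) :
    IntegrableOn (fun t => Real.exp (-x * Real.cosh t) * Real.cosh (k * t)) (Set.Ioi 0) := by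
  apply Integrable.mono' (g := fun t => Real.exp (2*(k+1)^2/x) * Real.exp (-t))
  · have : IntegrableOn (fun t : ℝ => Real.exp (-1 * t)) (Set.Ioi (0:ℝ)) :=
      exp_neg_integrableOn_Ioi 0 one_pos
    simp only [neg_one_mul] at this
    exact this.const_mul _
  · apply Continuous.aestronglyMeasurable
    continuity
  · filter_upwards [ae_restrict_mem measurableSet_Ioi] with t ht
    rw [Real.norm_eq_abs, abs_of_nonneg (by positivity)]
    exact besselK_integrand_le k hx ht

lemma sqrt_integrand_integrable {x : ℝ} :
    IntegrableOn (fun v => Real.exp (-Real.sqrt (x^2 + v^2))) (Set.Ioi 0) := by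
  apply Integrable.mono' (g := fun v => Real.exp (-v))
  · have : IntegrableOn (fun t : ℝ => Real.exp (-1 * t)) (Set.Ioi (0:ℝ)) :=
      exp_neg_integrableOn_Ioi 0 one_pos
    simpa only [neg_one_mul, IntegrableOn] using this
  · apply Continuous.aestronglyMeasurable
    continuity
  · filter_upwards [ae_restrict_mem measurableSet_Ioi] with v hv
    rw [Real.norm_eq_abs, abs_of_nonneg (by positivity)]
    rw [Real.exp_le_exp, neg_le_neg_iff]
    calc v = Real.sqrt (v^2) := (Real.sqrt_sq (le_of_lt hv)).symm
    _ ≤ Real.sqrt (x^2 + v^2) := Real.sqrt_le_sqrt (by nlinarith)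

lemma integral_sqrt_eq_K1 {x : ℝ} (hx : 0 < x) :
    ∫ v in Set.Ioi (0:ℝ), Real.exp (-Real.sqrt (x^2 + v^2)) = x * besselK 1 x := by
  have himg : (fun t => x * Real.sinh t) '' Set.Ioi (0:ℝ) = Set.Ioi (0:ℝ) := by
    ext v
    constructor
    · rintro ⟨t, ht, rfl⟩
      have : 0 < Real.sinh t := Real.sinh_pos_iff.mpr ht
      exact mul_pos hx this
    · intro hv
      refine ⟨Real.arsinh (v/x), ?_, ?_⟩
      · have : Real.arsinh 0 < Real.arsinh (v/x) :=
          Real.arsinh_strictMono (div_pos hv hx)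
        simpa [Real.arsinh_zero] using this
      · show x * Real.sinh (Real.arsinh (v/x)) = v
        rw [Real.sinh_arsinh]
        field_simp
  have key := integral_image_eq_integral_abs_deriv_smul (s := Set.Ioi (0:ℝ)) (f' := fun t => x * Real.cosh t)
    measurableSet_Ioi
    (fun t _ => ((Real.hasDerivAt_sinh t).const_mul x).hasDerivWithinAt)
    (fun a _ b _ h => by
      have := Real.sinh_injective (mul_left_cancel₀ hx.ne' h)
      exact this)
    (fun v => Real.exp (-Real.sqrt (x^2 + v^2)))
  rw [himg] at key
  rw [key]
  have heq : ∀ t ∈ Set.Ioi (0:ℝ),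
      |x * Real.cosh t| • Real.exp (-Real.sqrt (x^2 + (x * Real.sinh t)^2))
        = x * (Real.exp (-x * Real.cosh t) * Real.cosh ((1:ℕ) * t)) := by
    intro t _
    have hc : 0 < Real.cosh t := Real.cosh_pos t
    have hsq : Real.sqrt (x^2 + (x * Real.sinh t)^2) = x * Real.cosh t := by
      have : x^2 + (x * Real.sinh t)^2 = (x * Real.cosh t)^2 := by
        have := Real.cosh_sq t
        nlinarith
      rw [this, Real.sqrt_sq (by positivity)]
    rw [hsq, abs_of_nonneg (by positivity), smul_eq_mul]
    simp only [Nat.cast_one, one_mul]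
    ring
  rw [setIntegral_congr_fun measurableSet_Ioi heq, besselK]
  rw [← integral_const_mul]

lemma exp_ge_two_mul {y : ℝ} (hy : 0 ≤ y) : 2 * y ≤ Real.exp y := by
  have h := Real.quadratic_le_exp_of_nonneg hy
  nlinarith [sq_nonneg (1-y)]

lemma besselK0_eq (r : ℝ) : besselK 0 r = ∫ t in Set.Ioi (0:ℝ), Real.exp (-r * Real.cosh t) := by
  rw [besselK]
  congr 1
  ext t
  norm_num

lemma besselK0_bounds {r : ℝ} (h0 : 0 < r) (h1 : r < 1) :
    -Real.log r - 1 ≤ besselK 0 r ∧ besselK 0 r ≤ -Real.log r + 1 := by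
  set T := -Real.log r with hTdef
  have hT : 0 < T := by
    have := Real.log_neg h0 h1
    simp [hTdef]; linarith
  have hint : IntegrableOn (fun t => Real.exp (-r * Real.cosh t)) (Set.Ioi 0) := by
    have := besselK_integrable 0 h0
    simp only [Nat.cast_zero, zero_mul, Real.cosh_zero, mul_one] at this
    exact this
  have hint1 : IntegrableOn (fun t => Real.exp (-r * Real.cosh t)) (Set.Ioc 0 T) :=
    hint.mono_set Set.Ioc_subset_Ioi_self
  have hint2 : IntegrableOn (fun t => Real.exp (-r * Real.cosh t)) (Set.Ioi T) :=
    hint.mono_set (Set.Ioi_subset_Ioi hT.le)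
  have hsplit : besselK 0 r = (∫ t in Set.Ioc (0:ℝ) T, Real.exp (-r * Real.cosh t))
      + ∫ t in Set.Ioi T, Real.exp (-r * Real.cosh t) := by
    rw [besselK0_eq, ← setIntegral_union (Set.Ioc_disjoint_Ioi le_rfl) measurableSet_Ioi hint1 hint2,
      Set.Ioc_union_Ioi_eq_Ioi hT.le]
  have hrexp : ∀ t : ℝ, r * Real.exp t = Real.exp (t - T) := by
    intro t
    rw [hTdef, sub_neg_eq_add, Real.exp_add, Real.exp_log h0]
    ring
  have hcosh_ge : ∀ t : ℝ, Real.exp t / 2 ≤ Real.cosh t := by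
    intro t
    rw [Real.cosh_eq]
    have := (Real.exp_pos (-t)).le
    linarith
  constructor
  · -- lower bound
    have h2 : 0 ≤ ∫ t in Set.Ioi T, Real.exp (-r * Real.cosh t) :=
      setIntegral_nonneg measurableSet_Ioi (fun t _ => (Real.exp_pos _).le)
    have h3 : (∫ t in Set.Ioc (0:ℝ) T, (1 - r * Real.exp t))
        ≤ ∫ t in Set.Ioc (0:ℝ) T, Real.exp (-r * Real.cosh t) := by
      apply setIntegral_mono_on
      · exact (Continuous.integrableOn_Ioc (by continuity))
      · exact hint1
      · exact measurableSet_Ioc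
      · intro t ht
        have hc : Real.cosh t ≤ Real.exp t := cosh_le_exp_of_nonneg ht.1.le
        have := Real.add_one_le_exp (-r * Real.cosh t)
        nlinarith [Real.cosh_pos t]
    have h4 : (∫ t in Set.Ioc (0:ℝ) T, (1 - r * Real.exp t)) = T - r * (Real.exp T - 1) := by
      rw [← intervalIntegral.integral_of_le hT.le]
      have : IntervalIntegrable (fun t : ℝ => r * Real.exp t) volume 0 T :=
        (Continuous.intervalIntegrable (by continuity) 0 T)
      rw [intervalIntegral.integral_sub (intervalIntegrable_const) this,
        intervalIntegral.integral_const, intervalIntegral.integral_const_mul,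
        integral_exp]
      simp
    have h5 : r * Real.exp T = 1 := by
      rw [hTdef, Real.exp_neg, Real.exp_log h0]
      field_simp
    have h6 : T - r * (Real.exp T - 1) ≥ T - 1 := by nlinarith
    rw [hsplit]; rw [h4] at h3; linarith
  · -- upper bound
    have h2 : (∫ t in Set.Ioc (0:ℝ) T, Real.exp (-r * Real.cosh t))
        ≤ ∫ t in Set.Ioc (0:ℝ) T, (1:ℝ) := by
      apply setIntegral_mono_on hint1 (integrableOn_const measure_Ioc_lt_top.ne)
        measurableSet_Ioc
      intro t _
      rw [Real.exp_le_one_iff]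
      nlinarith [Real.cosh_pos t]
    have h2' : (∫ t in Set.Ioc (0:ℝ) T, (1:ℝ)) = T := by
      simp [Real.volume_Ioc, hT.le]
    have h3 : (∫ t in Set.Ioi T, Real.exp (-r * Real.cosh t))
        ≤ ∫ t in Set.Ioi T, Real.exp T * Real.exp (-t) := by
      apply setIntegral_mono_on hint2 _ measurableSet_Ioi
      · intro t ht
        rw [← Real.exp_add, Real.exp_le_exp]
        have hc := hcosh_ge t
        have he : r * Real.exp t = Real.exp (t - T) := hrexp t
        have h2y : 2 * (t - T) ≤ Real.exp (t - T) := exp_ge_two_mul (by simp at ht; linarith)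
        nlinarith [mul_le_mul_of_nonneg_left hc h0.le]
      · have : IntegrableOn (fun t : ℝ => Real.exp (-1 * t)) (Set.Ioi T) :=
          exp_neg_integrableOn_Ioi T one_pos
        simp only [neg_one_mul] at this
        exact this.const_mul _
    have h3' : (∫ t in Set.Ioi T, Real.exp T * Real.exp (-t)) = 1 := by
      rw [integral_const_mul, integral_exp_neg_Ioi, ← Real.exp_add]
      simp
    rw [hsplit]; linarith

lemma tendsto_neg_log : Tendsto (fun r : ℝ => -Real.log r) (nhdsWithin 0 (Set.Ioi 0)) atTop :=
  tendsto_neg_atBot_atTop.comp Real.tendsto_log_nhdsGT_zero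

lemma tendsto_besselK0 :
    Tendsto (fun r : ℝ => besselK 0 r / (-Real.log r)) (nhdsWithin 0 (Set.Ioi 0)) (nhds 1) := by
  have hinv : Tendsto (fun r : ℝ => 1 / (-Real.log r)) (nhdsWithin 0 (Set.Ioi 0)) (nhds 0) := by
    simpa [Function.comp_def] using tendsto_inv_atTop_zero.comp tendsto_neg_log
  apply tendsto_of_tendsto_of_tendsto_of_le_of_le' (g := fun r : ℝ => 1 - 1/(-Real.log r))
    (h := fun r : ℝ => 1 + 1/(-Real.log r))
  · simpa using (tendsto_const_nhds (x := (1:ℝ)) (f := nhdsWithin (0:ℝ) (Set.Ioi 0))).sub hinv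
  · simpa using (tendsto_const_nhds (x := (1:ℝ)) (f := nhdsWithin (0:ℝ) (Set.Ioi 0))).add hinv
  · filter_upwards [mem01] with r hr
    have hT : 0 < -Real.log r := by
      have := Real.log_neg hr.1 hr.2; linarith
    have hb := (besselK0_bounds hr.1 hr.2).1
    rw [sub_le_iff_le_add, ← add_div, le_div_iff₀ hT]
    have : (1 * (-Real.log r) : ℝ) = -Real.log r := one_mul _
    nlinarith
  · filter_upwards [mem01] with r hr
    have hT : 0 < -Real.log r := by
      have := Real.log_neg hr.1 hr.2; linarith
    have hb := (besselK0_bounds hr.1 hr.2).2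
    rw [div_le_iff₀ hT]
    have hne : Real.log r ≠ 0 := by intro h; rw [h] at hT; norm_num at hT
    have h1 : (1 + 1/(-Real.log r)) * (-Real.log r) = -Real.log r + 1 := by
      field_simp
      ring
    rw [h1]
    linarith

lemma expneg_integrable {a : ℝ} : IntegrableOn (fun w : ℝ => Real.exp (-w)) (Set.Ioi a) := by
  simpa only [neg_one_mul] using exp_neg_integrableOn_Ioi a one_pos

noncomputable def Pfun (x : ℝ) : ℝ :=
  ∫ w in Set.Ioi (0:ℝ), (Real.exp (-w) - Real.exp (-Real.sqrt (x^2+w^2)))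

lemma Pfun_integrable {x : ℝ} :
    IntegrableOn (fun w : ℝ => Real.exp (-w) - Real.exp (-Real.sqrt (x^2+w^2))) (Set.Ioi 0) :=
  expneg_integrable.sub sqrt_integrand_integrable

lemma Pfun_eq {x : ℝ} (hx : 0 < x) : Pfun x = 1 - x * besselK 1 x := by
  rw [Pfun, integral_sub expneg_integrable sqrt_integrand_integrable,
    integral_exp_neg_Ioi_zero, integral_sqrt_eq_K1 hx]

lemma sqrt_ge {x w : ℝ} (hw : 0 ≤ w) : w ≤ Real.sqrt (x^2 + w^2) := by
  calc w = Real.sqrt (w^2) := (Real.sqrt_sq hw).symm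
  _ ≤ Real.sqrt (x^2 + w^2) := Real.sqrt_le_sqrt (by nlinarith)

lemma sqrt_le_add {x w : ℝ} (hx : 0 ≤ x) (hw : 0 ≤ w) : Real.sqrt (x^2 + w^2) ≤ x + w := by
  rw [show x + w = Real.sqrt ((x+w)^2) by rw [Real.sqrt_sq (by linarith)]]
  exact Real.sqrt_le_sqrt (by nlinarith)

lemma sqrt_sub_le {x w : ℝ} (hx : 0 ≤ x) (hw : 0 < w) :
    Real.sqrt (x^2 + w^2) - w ≤ x^2/(2*w) := by
  have h : Real.sqrt (x^2 + w^2) ≤ w + x^2/(2*w) := by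
    rw [show w + x^2/(2*w) = Real.sqrt ((w + x^2/(2*w))^2) by
      rw [Real.sqrt_sq (by positivity)]]
    apply Real.sqrt_le_sqrt
    have h2 : (x^2/(2*w))^2 ≥ 0 := by positivity
    field_simp
    nlinarith [sq_nonneg (x^2)]
  linarith

lemma sqrt_sub_ge {x w : ℝ} (hx : 0 ≤ x) (hw : 0 ≤ w) :
    x^2/(x + 2*w) ≤ Real.sqrt (x^2 + w^2) - w := by
  rcases eq_or_lt_of_le (by positivity : (0:ℝ) ≤ x + 2*w) with h | h
  · have hx0 : x = 0 := by nlinarith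
    have hw0 : w = 0 := by nlinarith
    subst hx0; subst hw0; simp
  · have hs : Real.sqrt (x^2+w^2) ^ 2 = x^2 + w^2 := Real.sq_sqrt (by positivity)
    have h1 : Real.sqrt (x^2+w^2) ≤ x + w := sqrt_le_add hx hw
    have h2 : w ≤ Real.sqrt (x^2+w^2) := sqrt_ge hw
    rw [div_le_iff₀ h]
    nlinarith

lemma diff_le_mul {x w : ℝ} :
    Real.exp (-w) - Real.exp (-Real.sqrt (x^2+w^2))
      ≤ Real.exp (-w) * (Real.sqrt (x^2+w^2) - w) := by
  have h : Real.exp (-Real.sqrt (x^2+w^2)) = Real.exp (-w) * Real.exp (-(Real.sqrt (x^2+w^2) - w)) := by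
    rw [← Real.exp_add]; ring_nf
  rw [h]
  have h2 := Real.add_one_le_exp (-(Real.sqrt (x^2+w^2) - w))
  nlinarith [Real.exp_pos (-w)]

lemma diff_nonneg' {x w : ℝ} (hw : 0 ≤ w) :
    0 ≤ Real.exp (-w) - Real.exp (-Real.sqrt (x^2+w^2)) := by
  have := sqrt_ge (x := x) hw
  have := Real.exp_le_exp.mpr (neg_le_neg this)
  linarith

lemma Pfun_upper {x : ℝ} (h0 : 0 < x) (h1 : x < 1) :
    Pfun x ≤ x^2/2 * (-Real.log x) + 2*x^2 := by
  set d := fun w : ℝ => Real.exp (-w) - Real.exp (-Real.sqrt (x^2+w^2)) with hd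
  have hdint : IntegrableOn d (Set.Ioi 0) := Pfun_integrable
  have hsplit1 : Pfun x = (∫ w in Set.Ioc (0:ℝ) x, d w) + ∫ w in Set.Ioi x, d w := by
    rw [Pfun, ← setIntegral_union (Set.Ioc_disjoint_Ioi le_rfl) measurableSet_Ioi
      (hdint.mono_set Set.Ioc_subset_Ioi_self) (hdint.mono_set (Set.Ioi_subset_Ioi h0.le)),
      Set.Ioc_union_Ioi_eq_Ioi h0.le]
  have hsplit2 : (∫ w in Set.Ioi x, d w) = (∫ w in Set.Ioc x 1, d w) + ∫ w in Set.Ioi 1, d w := by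
    rw [← setIntegral_union (Set.Ioc_disjoint_Ioi le_rfl) measurableSet_Ioi
      (hdint.mono_set (Set.Ioc_subset_Ioi_self.trans (Set.Ioi_subset_Ioi h0.le)))
      (hdint.mono_set (Set.Ioi_subset_Ioi (by linarith))),
      Set.Ioc_union_Ioi_eq_Ioi h1.le]
  have hA1 : (∫ w in Set.Ioc (0:ℝ) x, d w) ≤ x^2 := by
    have : (∫ w in Set.Ioc (0:ℝ) x, d w) ≤ ∫ _ in Set.Ioc (0:ℝ) x, x := by
      apply setIntegral_mono_on (hdint.mono_set Set.Ioc_subset_Ioi_self)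
        (integrableOn_const measure_Ioc_lt_top.ne) measurableSet_Ioc
      intro w hw
      have hle := diff_le_mul (x := x) (w := w)
      have he1 : Real.exp (-w) ≤ 1 := Real.exp_le_one_iff.mpr (by linarith [hw.1])
      have hs1 : Real.sqrt (x^2+w^2) - w ≤ x := by
        have := sqrt_le_add h0.le hw.1.le; linarith
      have hs0 : 0 ≤ Real.sqrt (x^2+w^2) - w := by
        have := sqrt_ge (x := x) hw.1.le; linarith
      calc d w ≤ Real.exp (-w) * (Real.sqrt (x^2+w^2) - w) := hle
        _ ≤ 1 * x := mul_le_mul he1 hs1 hs0 one_pos.le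
        _ = x := one_mul x
    calc (∫ w in Set.Ioc (0:ℝ) x, d w) ≤ ∫ _ in Set.Ioc (0:ℝ) x, x := this
      _ = (volume (Set.Ioc (0:ℝ) x)).toReal • x := setIntegral_const x
      _ ≤ x^2 := by rw [Real.volume_Ioc]; simp; rw [ENNReal.toReal_ofReal h0.le]; nlinarith
  have hA2 : (∫ w in Set.Ioc x 1, d w) ≤ x^2/2 * (-Real.log x) := by
    have hcont : ContinuousOn (fun w : ℝ => x^2/2 * w⁻¹) (Set.Icc x 1) := by
      apply ContinuousOn.mul continuousOn_const
      apply ContinuousOn.inv₀ continuousOn_id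
      intro w hw; have := hw.1; intro h; simp only [id] at h; rw [h] at this; linarith
    have hbint : IntegrableOn (fun w : ℝ => x^2/2 * w⁻¹) (Set.Ioc x 1) :=
      (hcont.integrableOn_Icc).mono_set Set.Ioc_subset_Icc_self
    have hm : (∫ w in Set.Ioc x 1, d w) ≤ ∫ w in Set.Ioc x 1, x^2/2 * w⁻¹ := by
      apply setIntegral_mono_on
        (hdint.mono_set (Set.Ioc_subset_Ioi_self.trans (Set.Ioi_subset_Ioi h0.le)))
        hbint measurableSet_Ioc
      intro w hw
      have hw0 : 0 < w := lt_trans h0 hw.1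
      have hle := diff_le_mul (x := x) (w := w)
      have he1 : Real.exp (-w) ≤ 1 := Real.exp_le_one_iff.mpr (by linarith)
      have hs1 := sqrt_sub_le h0.le hw0
      have hs0 : 0 ≤ Real.sqrt (x^2+w^2) - w := by
        have := sqrt_ge (x := x) hw0.le; linarith
      calc d w ≤ Real.exp (-w) * (Real.sqrt (x^2+w^2) - w) := hle
        _ ≤ 1 * (x^2/(2*w)) := mul_le_mul he1 hs1 hs0 one_pos.le
        _ = x^2/2 * w⁻¹ := by field_simp
    have hval : (∫ w in Set.Ioc x 1, x^2/2 * w⁻¹) = x^2/2 * (-Real.log x) := by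
      rw [← intervalIntegral.integral_of_le h1.le, intervalIntegral.integral_const_mul,
        integral_inv_of_pos h0 one_pos]
      rw [show (1:ℝ)/x = x⁻¹ by ring, Real.log_inv]
    linarith [hm, hval.le, hval.ge]
  have hA3 : (∫ w in Set.Ioi (1:ℝ), d w) ≤ x^2/2 := by
    have hbint : IntegrableOn (fun w : ℝ => x^2/2 * Real.exp (-w)) (Set.Ioi 1) :=
      expneg_integrable.const_mul _
    have hm : (∫ w in Set.Ioi (1:ℝ), d w) ≤ ∫ w in Set.Ioi (1:ℝ), x^2/2 * Real.exp (-w) := by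
      apply setIntegral_mono_on (hdint.mono_set (Set.Ioi_subset_Ioi (by linarith)))
        hbint measurableSet_Ioi
      intro w hw
      have hw0 : (0:ℝ) < w := lt_trans one_pos hw
      have hle := diff_le_mul (x := x) (w := w)
      have hs1 := sqrt_sub_le h0.le hw0
      have hs2 : x^2/(2*w) ≤ x^2/2 := by
        apply div_le_div_of_nonneg_left (by positivity) (by norm_num)
        simp at hw; linarith
      calc d w ≤ Real.exp (-w) * (Real.sqrt (x^2+w^2) - w) := hle
        _ ≤ Real.exp (-w) * (x^2/2) := by
            apply mul_le_mul_of_nonneg_left _ (Real.exp_pos _).le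
            linarith
        _ = x^2/2 * Real.exp (-w) := by ring
    have hval : (∫ w in Set.Ioi (1:ℝ), x^2/2 * Real.exp (-w)) = x^2/2 * Real.exp (-1) := by
      rw [integral_const_mul, integral_exp_neg_Ioi]
    have : x^2/2 * Real.exp (-1) ≤ x^2/2 := by
      have h := Real.exp_le_one_iff.mpr (by norm_num : (-1:ℝ) ≤ 0)
      nlinarith
    linarith
  rw [hsplit1, hsplit2]
  nlinarith [sq_nonneg x]

lemma one_sub_exp_neg_ge {s : ℝ} (hs : 0 ≤ s) : s - s^2/2 ≤ 1 - Real.exp (-s) := by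
  have hq := Real.quadratic_le_exp_of_nonneg hs
  have hp := Real.exp_pos s
  have he : Real.exp (-s) = (Real.exp s)⁻¹ := Real.exp_neg s
  rw [he]
  have h2 : (Real.exp s)⁻¹ ≤ 1 - s + s^2/2 := by
    rw [inv_le_iff_one_le_mul₀ hp]
    nlinarith [sq_nonneg (s*s), sq_nonneg s]
  linarith

lemma Pfun_lower {x : ℝ} (h0 : 0 < x) (h1 : x < 1) :
    (1 - x/2) * (x^2/2 * (-Real.log x) - x^2/2) ≤ Pfun x := by
  set d := fun w : ℝ => Real.exp (-w) - Real.exp (-Real.sqrt (x^2+w^2)) with hd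
  set g := fun w : ℝ => (1 - x/2) * (x^2 * (x+2*w)⁻¹ - x^2/2) with hg
  have hdint : IntegrableOn d (Set.Ioi 0) := Pfun_integrable
  have hsplit : Pfun x = (∫ w in Set.Ioc (0:ℝ) 1, d w) + ∫ w in Set.Ioi (1:ℝ), d w := by
    rw [Pfun, ← setIntegral_union (Set.Ioc_disjoint_Ioi le_rfl) measurableSet_Ioi
      (hdint.mono_set Set.Ioc_subset_Ioi_self) (hdint.mono_set (Set.Ioi_subset_Ioi zero_le_one)),
      Set.Ioc_union_Ioi_eq_Ioi zero_le_one]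
  have htail : 0 ≤ ∫ w in Set.Ioi (1:ℝ), d w :=
    setIntegral_nonneg measurableSet_Ioi (fun w hw => diff_nonneg' (by simp at hw; linarith))
  have hgcont : ContinuousOn g (Set.Icc (0:ℝ) 1) := by
    apply ContinuousOn.mul continuousOn_const
    apply ContinuousOn.sub _ continuousOn_const
    apply ContinuousOn.mul continuousOn_const
    apply ContinuousOn.inv₀ (by fun_prop)
    intro w hw
    have := hw.1; positivity
  have hgint : IntegrableOn g (Set.Ioc (0:ℝ) 1) :=
    hgcont.integrableOn_Icc.mono_set Set.Ioc_subset_Icc_self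
  have hmono : (∫ w in Set.Ioc (0:ℝ) 1, g w) ≤ ∫ w in Set.Ioc (0:ℝ) 1, d w := by
    apply setIntegral_mono_on hgint (hdint.mono_set Set.Ioc_subset_Ioi_self) measurableSet_Ioc
    intro w hw
    obtain ⟨hw0, hw1⟩ := hw
    set s := Real.sqrt (x^2+w^2) - w with hs
    have hs0 : 0 ≤ s := by have := sqrt_ge (x := x) hw0.le; simp [hs]; linarith
    have hsx : s ≤ x := by have := sqrt_le_add h0.le hw0.le; simp [hs]; linarith
    have hslo : x^2/(x+2*w) ≤ s := sqrt_sub_ge h0.le hw0.le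
    have hws : w * s ≤ x^2/2 := by
      have h3 := sqrt_sub_le h0.le hw0
      have : s ≤ x^2/(2*w) := h3
      calc w * s ≤ w * (x^2/(2*w)) := mul_le_mul_of_nonneg_left this hw0.le
        _ = x^2/2 := by field_simp
    have hdw : d w = Real.exp (-w) * (1 - Real.exp (-s)) := by
      rw [hd]
      simp only []
      rw [mul_sub, mul_one, ← Real.exp_add]
      congr 2
      simp [hs]; ring
    rw [hdw]
    have h1e : 1 - w ≤ Real.exp (-w) := by have := Real.add_one_le_exp (-w); linarith
    have h2e : s * (1 - x/2) ≤ 1 - Real.exp (-s) := by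
      have := one_sub_exp_neg_ge hs0
      nlinarith
    have hprod : (1 - w) * (s * (1 - x/2)) ≤ Real.exp (-w) * (1 - Real.exp (-s)) := by
      apply mul_le_mul h1e h2e (by nlinarith) (Real.exp_pos _).le
    refine le_trans ?_ hprod
    rw [hg]
    simp only []
    have hx2 : 0 ≤ 1 - x/2 := by linarith
    have hkey : x^2 * (x+2*w)⁻¹ - x^2/2 ≤ (1-w) * s := by
      have hden : (0:ℝ) < x + 2*w := by positivity
      have : x^2 * (x+2*w)⁻¹ ≤ s := by
        rw [← div_eq_mul_inv]; exact hslo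
      nlinarith
    nlinarith
  have hgval : (∫ w in Set.Ioc (0:ℝ) 1, g w)
      = (1 - x/2) * (x^2/2 * (Real.log (x+2) - Real.log x) - x^2/2) := by
    have hFTC : ∀ w ∈ Set.uIcc (0:ℝ) 1, HasDerivAt
        (fun w => (1 - x/2) * (x^2/2 * Real.log (x+2*w) - x^2/2*w)) (g w) w := by
      intro w hw
      rw [Set.uIcc_of_le zero_le_one] at hw
      have hden : (0:ℝ) < x + 2*w := by have := hw.1; positivity
      have h1 : HasDerivAt (fun w : ℝ => x + 2*w) 2 w := by
        simpa using ((hasDerivAt_id w).const_mul (2:ℝ)).const_add x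
      have h2 : HasDerivAt (fun w : ℝ => Real.log (x+2*w)) ((x+2*w)⁻¹ * 2) w :=
        by have := (Real.hasDerivAt_log hden.ne').comp w h1; exact this
      have h3 := ((h2.const_mul (x^2/2)).sub ((hasDerivAt_id w).const_mul (x^2/2))).const_mul (1-x/2)
      refine h3.congr_deriv ?_
      rw [hg]
      field_simp
    rw [← intervalIntegral.integral_of_le zero_le_one,
      intervalIntegral.integral_eq_sub_of_hasDerivAt hFTC
        ((hgcont.mono (by rw [Set.uIcc_of_le zero_le_one])).intervalIntegrable)]
    simp
    ring
  have hfinal : (1 - x/2) * (x^2/2 * (-Real.log x) - x^2/2)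
      ≤ (1 - x/2) * (x^2/2 * (Real.log (x+2) - Real.log x) - x^2/2) := by
    apply mul_le_mul_of_nonneg_left _ (by linarith)
    have hlog : 0 ≤ Real.log (x+2) := Real.log_nonneg (by linarith)
    nlinarith [sq_nonneg x]
  rw [hsplit]
  linarith [hmono, hgval.le, hgval.ge, hfinal]

lemma hinv_tendsto : Tendsto (fun r : ℝ => 1 / (-Real.log r)) (nhdsWithin 0 (Set.Ioi 0)) (nhds 0) := by
  simpa [Function.comp_def] using tendsto_inv_atTop_zero.comp tendsto_neg_log

lemma tendsto_K1ratio :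
    Tendsto (fun x : ℝ => (x * besselK 1 x - 1) / (x^2 * Real.log x))
      (nhdsWithin 0 (Set.Ioi 0)) (nhds (1/2)) := by
  have hQ : Tendsto (fun x : ℝ => Pfun x / (x^2 * (-Real.log x)))
      (nhdsWithin 0 (Set.Ioi 0)) (nhds (1/2)) := by
    apply tendsto_of_tendsto_of_tendsto_of_le_of_le'
      (g := fun x : ℝ => (1 - x/2) * (1/2 - (1/2) * (1/(-Real.log x))))
      (h := fun x : ℝ => 1/2 + 2 * (1/(-Real.log x)))
    · have ha : Tendsto (fun x : ℝ => 1 - x/2) (nhdsWithin 0 (Set.Ioi 0)) (nhds 1) := by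
        have : Tendsto (fun x : ℝ => 1 - x/2) (nhds 0) (nhds (1 - 0/2)) :=
          Continuous.tendsto (by continuity) 0
        simpa using this.mono_left nhdsWithin_le_nhds
      have hb : Tendsto (fun x : ℝ => 1/2 - (1/2) * (1/(-Real.log x)))
          (nhdsWithin 0 (Set.Ioi 0)) (nhds (1/2)) := by
        have := (hinv_tendsto.const_mul (1/2:ℝ)).const_sub (1/2:ℝ)
        simpa using this
      simpa using ha.mul hb
    · have := (hinv_tendsto.const_mul (2:ℝ)).const_add (1/2:ℝ)
      simpa using this
    · filter_upwards [mem01] with x hx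
      have hL : 0 < -Real.log x := by have := Real.log_neg hx.1 hx.2; linarith
      have hlo := Pfun_lower hx.1 hx.2
      have hlogne : Real.log x ≠ 0 := ne_of_lt (by linarith)
      rw [le_div_iff₀ (mul_pos (pow_pos hx.1 2) hL)]
      have : (1 - x/2) * (1/2 - (1/2) * (1/(-Real.log x))) * (x^2 * (-Real.log x))
          = (1 - x/2) * (x^2/2 * (-Real.log x) - x^2/2) := by
        field_simp
        ring
      rw [this]
      exact hlo
    · filter_upwards [mem01] with x hx
      have hL : 0 < -Real.log x := by have := Real.log_neg hx.1 hx.2; linarith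
      have hup := Pfun_upper hx.1 hx.2
      have hlogne : Real.log x ≠ 0 := ne_of_lt (by linarith)
      rw [div_le_iff₀ (mul_pos (pow_pos hx.1 2) hL)]
      have : (1/2 + 2 * (1/(-Real.log x))) * (x^2 * (-Real.log x))
          = x^2/2 * (-Real.log x) + 2*x^2 := by
        field_simp
        ring
      rw [this]
      exact hup
  apply hQ.congr'
  filter_upwards [mem01] with x hx
  rw [show x * besselK 1 x - 1 = -Pfun x by rw [Pfun_eq hx.1]; ring]
  rw [mul_neg, div_neg, ← neg_div]


lemma tendsto_Nratio :
    Tendsto (fun x : ℝ => (2*besselI 1 x*besselK 1 x + 2*besselI 2 x*besselK 0 x - 1)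
      / (x^2 * Real.log x)) (nhdsWithin 0 (Set.Ioi 0)) (nhds (1/4)) := by
  have hT1 : Tendsto (fun x : ℝ => 2 * (besselI 1 x / x)) (nhdsWithin 0 (Set.Ioi 0)) (nhds 1) := by
    have := tendsto_besselI1.const_mul (2:ℝ)
    norm_num at this
    exact this
  have hT2 := tendsto_K1ratio
  have hT3 : Tendsto (fun x : ℝ => (2 * (besselI 1 x / x) - 1) / (x^2 * Real.log x))
      (nhdsWithin 0 (Set.Ioi 0)) (nhds 0) := by
    apply squeeze_zero_norm' (a := fun x : ℝ => (1/2) * (1/(-Real.log x)))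
    · filter_upwards [mem01] with x hx
      have hx0 := hx.1
      have hL : 0 < -Real.log x := by have := Real.log_neg hx.1 hx.2; linarith
      have hlow := besselI_lower 1 hx0.le
      have hupp := besselI_upper 1 hx0.le hx.2.le
      norm_num at hlow hupp
      have hnum0 : 0 ≤ 2 * (besselI 1 x / x) - 1 := by
        have h1 : (1:ℝ) ≤ 2 * (besselI 1 x / x) := by
          rw [mul_div_assoc', le_div_iff₀ hx0, one_mul]
          linarith
        linarith
      have hnum1 : 2 * (besselI 1 x / x) - 1 ≤ x^2/2 := by
        have h1 : 2 * (besselI 1 x / x) ≤ 1 + x^2/2 := by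
          rw [mul_div_assoc', div_le_iff₀ hx0]
          nlinarith
        linarith
      have hden : 0 < x^2 * (-Real.log x) := mul_pos (pow_pos hx0 2) hL
      have habs : ‖(2 * (besselI 1 x / x) - 1) / (x^2 * Real.log x)‖
          = (2 * (besselI 1 x / x) - 1) / (x^2 * (-Real.log x)) := by
        rw [Real.norm_eq_abs, abs_div, abs_of_nonneg hnum0, abs_of_neg (by nlinarith : x^2 * Real.log x < 0)]
        congr 1
        ring
      rw [habs, div_le_iff₀ hden]
      have hlogne : Real.log x ≠ 0 := ne_of_lt (by linarith)
      have : (1/2) * (1/(-Real.log x)) * (x^2 * (-Real.log x)) = x^2/2 := by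
        field_simp
      rw [this]
      exact hnum1
    · have := hinv_tendsto.const_mul (1/2:ℝ)
      simpa using this
  have hT4 : Tendsto (fun x : ℝ => 2 * (besselI 2 x / x^2) * (besselK 0 x / Real.log x))
      (nhdsWithin 0 (Set.Ioi 0)) (nhds (-(1/4))) := by
    have hK0' : Tendsto (fun r : ℝ => besselK 0 r / Real.log r)
        (nhdsWithin 0 (Set.Ioi 0)) (nhds (-1)) := by
      have heq : (fun r : ℝ => besselK 0 r / Real.log r)
          = fun r => -(besselK 0 r / (-Real.log r)) := by
        funext r
        rw [← neg_neg (Real.log r), div_neg, neg_neg]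
      rw [heq]
      exact tendsto_besselK0.neg
    have := (tendsto_besselI2.const_mul (2:ℝ)).mul hK0'
    norm_num at this
    convert this using 2 <;> norm_num
  have hsum := (hT1.mul hT2).add (hT3.add hT4)
  norm_num at hsum
  apply hsum.congr'
  filter_upwards [mem01] with x hx
  have hx0 : x ≠ 0 := hx.1.ne'
  have hL : Real.log x < 0 := Real.log_neg hx.1 hx.2
  have hlogne : Real.log x ≠ 0 := ne_of_lt hL
  field_simp
  ring

lemma tendsto_Dratio :
    Tendsto (fun x : ℝ => (besselI 1 x^2 - besselI 0 x * besselI 2 x) / x^2)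
      (nhdsWithin 0 (Set.Ioi 0)) (nhds (1/8)) := by
  have h := ((tendsto_besselI1.mul tendsto_besselI1).sub
    (tendsto_besselI0.mul tendsto_besselI2))
  norm_num at h
  apply h.congr'
  filter_upwards [mem01] with x hx
  have hx0 : x ≠ 0 := hx.1.ne'
  field_simp

theorem sphereG_asymptotic :
    Filter.Tendsto (fun r : ℝ => sphereG r / (-(1 / (2 * Real.pi ^ 2)) * Real.log r))
      (nhdsWithin 0 (Set.Ioi 0)) (nhds 1) := by
  have hDpos : ∀ᶠ x : ℝ in nhdsWithin 0 (Set.Ioi 0),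
      0 < (besselI 1 x^2 - besselI 0 x * besselI 2 x) / x^2 :=
    tendsto_Dratio.eventually (eventually_gt_nhds (by norm_num))
  have hT : Tendsto (fun x : ℝ =>
      (1/2) * ((2*besselI 1 x*besselK 1 x + 2*besselI 2 x*besselK 0 x - 1) / (x^2 * Real.log x))
        * (((besselI 1 x^2 - besselI 0 x * besselI 2 x) / x^2)⁻¹))
      (nhdsWithin 0 (Set.Ioi 0)) (nhds 1) := by
    have := ((tendsto_Nratio.const_mul (1/2:ℝ)).mul (tendsto_Dratio.inv₀ (by norm_num)))
    norm_num at this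
    convert this using 2
    norm_num
  apply hT.congr'
  filter_upwards [mem01, hDpos] with x hx hD
  have hx0 : x ≠ 0 := hx.1.ne'
  have hL : Real.log x < 0 := Real.log_neg hx.1 hx.2
  have hlogne : Real.log x ≠ 0 := ne_of_lt hL
  have hDne : besselI 1 x^2 - besselI 0 x * besselI 2 x ≠ 0 := by
    intro h
    rw [h] at hD
    simp at hD
  have hpi : Real.pi ≠ 0 := Real.pi_ne_zero
  rw [sphereG]
  field_simp
  ring
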